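/- Let p, q be coprime positive integers such that p/q is not an even integer, set ρ = p/q, and let Ω0 > 0. Suppose u0 : ℝ → ℝ is C¹ with u0(τ + πρ) = −u0(τ) for all τ, b : ℝ → ℝ is continuous with b(τ + πρ) = −b(τ) for all τ, and F̃ : ℝ → ℝ is continuous and πρ-periodic. Then for every τ0 ∈ ℝ the following integrals all vanish: ∫₀^{2πp} e^{F̃(τ)} b(τ) (ρΩ0)⁻¹ u̇0(τ)(3u0(τ)² − 1) sin(τ+τ0) dτ = 0, ∫₀^{2πp} e^{F̃(τ)} b(τ) (ρΩ0)⁻² u0(τ)(u0(τ)² − 1) sin(τ+τ0) dτ = 0, and ∫₀^{2πp} e^{F̃(τ)} b(τ) (ρΩ0)⁻¹ u0(τ)(u0(τ)² − 1) cos(τ+τ0) dτ = 0. (Hence the first-order compatibility condition forces ε1 = 0 for all resonances p:q with p/q not an even integer.) -/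

import Mathlib

open Real

/-- Key lemma: a continuous `T`-periodic function integrated against
`sin (τ + τ0)` and `cos (τ + τ0)` over `2q` full periods (which is also a
multiple of `2π`) gives zero, provided `cos T ≠ 1`. -/
lemma periodic_pair_integral_zero (g : ℝ → ℝ) (hg : Continuous g)
    (T L : ℝ) (hgT : Function.Periodic g T)
    (hgL : Function.Periodic g L)
    (hL2pi : ∃ n : ℤ, L = n * (2 * π))
    (hcT : Real.cos T ≠ 1) (τ0 : ℝ) :
    (∫ τ in (0:ℝ)..L, g τ * Real.sin (τ + τ0)) = 0 ∧
    (∫ τ in (0:ℝ)..L, g τ * Real.cos (τ + τ0)) = 0 := by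
  obtain ⟨n, hn⟩ := hL2pi
  set I := ∫ τ in (0:ℝ)..L, g τ * Real.sin (τ + τ0) with hIdef
  set J := ∫ τ in (0:ℝ)..L, g τ * Real.cos (τ + τ0) with hJdef
  -- the shifted integral identity
  have shift : ∀ f : ℝ → ℝ, Function.Periodic f L →
      (∫ τ in (0:ℝ)..L, f (τ + T)) = ∫ τ in (0:ℝ)..L, f τ := by
    intro f hf
    rw [intervalIntegral.integral_comp_add_right]
    have := hf.intervalIntegral_add_eq T 0
    simpa [add_comm] using this
  have hsinL : ∀ x : ℝ, Real.sin (x + L + τ0) = Real.sin (x + τ0) := by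
    intro x
    have : x + L + τ0 = x + τ0 + n * (2 * π) := by rw [hn]; ring
    rw [this, Real.sin_add_int_mul_two_pi]
  have hcosL : ∀ x : ℝ, Real.cos (x + L + τ0) = Real.cos (x + τ0) := by
    intro x
    have : x + L + τ0 = x + τ0 + n * (2 * π) := by rw [hn]; ring
    rw [this, Real.cos_add_int_mul_two_pi]
  have hcont1 : Continuous fun τ => g τ * Real.sin (τ + τ0) := by fun_prop
  have hcont2 : Continuous fun τ => g τ * Real.cos (τ + τ0) := by fun_prop
  have hper1 : Function.Periodic (fun τ => g τ * Real.sin (τ + τ0)) L := by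
    intro x; simp only [hgL x, hsinL x]
  have hper2 : Function.Periodic (fun τ => g τ * Real.cos (τ + τ0)) L := by
    intro x; simp only [hgL x, hcosL x]
  have eqI : I = Real.cos T * I + Real.sin T * J := by
    have h1 := shift (fun τ => g τ * Real.sin (τ + τ0)) hper1
    have h2 : (∫ τ in (0:ℝ)..L, g (τ + T) * Real.sin (τ + T + τ0))
        = ∫ τ in (0:ℝ)..L, (Real.cos T * (g τ * Real.sin (τ + τ0))
            + Real.sin T * (g τ * Real.cos (τ + τ0))) := by
      apply intervalIntegral.integral_congr
      intro x _
      show g (x + T) * Real.sin (x + T + τ0) = _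
      have hx : x + T + τ0 = (x + τ0) + T := by ring
      rw [hgT x, hx, Real.sin_add]
      ring
    rw [h2] at h1
    rw [intervalIntegral.integral_add (f := fun τ => Real.cos T * (g τ * Real.sin (τ + τ0))) (g := fun τ => Real.sin T * (g τ * Real.cos (τ + τ0))) ((continuous_const.mul hcont1 : Continuous fun τ => Real.cos T * (g τ * Real.sin (τ + τ0))).intervalIntegrable _ _)
      ((continuous_const.mul hcont2 : Continuous fun τ => Real.sin T * (g τ * Real.cos (τ + τ0))).intervalIntegrable _ _),
      intervalIntegral.integral_const_mul, intervalIntegral.integral_const_mul] at h1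
    exact h1.symm
  have eqJ : J = Real.cos T * J - Real.sin T * I := by
    have h1 := shift (fun τ => g τ * Real.cos (τ + τ0)) hper2
    have h2 : (∫ τ in (0:ℝ)..L, g (τ + T) * Real.cos (τ + T + τ0))
        = ∫ τ in (0:ℝ)..L, (Real.cos T * (g τ * Real.cos (τ + τ0))
            - Real.sin T * (g τ * Real.sin (τ + τ0))) := by
      apply intervalIntegral.integral_congr
      intro x _
      show g (x + T) * Real.cos (x + T + τ0) = _
      have hx : x + T + τ0 = (x + τ0) + T := by ring
      rw [hgT x, hx, Real.cos_add]
      ring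
    rw [h2] at h1
    rw [intervalIntegral.integral_sub (f := fun τ => Real.cos T * (g τ * Real.cos (τ + τ0))) (g := fun τ => Real.sin T * (g τ * Real.sin (τ + τ0))) ((continuous_const.mul hcont2 : Continuous fun τ => Real.cos T * (g τ * Real.cos (τ + τ0))).intervalIntegrable _ _)
      ((continuous_const.mul hcont1 : Continuous fun τ => Real.sin T * (g τ * Real.sin (τ + τ0))).intervalIntegrable _ _),
      intervalIntegral.integral_const_mul, intervalIntegral.integral_const_mul] at h1
    exact h1.symm
  have pyth := Real.sin_sq_add_cos_sq T
  have hI0 : I = 0 := by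
    have h2 : (2 - 2 * Real.cos T) * I = 0 := by
      linear_combination (1 - Real.cos T) * eqI + Real.sin T * eqJ - I * pyth
    have hne : 2 - 2 * Real.cos T ≠ 0 := by
      intro h; apply hcT; linarith
    exact (mul_eq_zero.mp h2).resolve_left hne
  have hJ0 : J = 0 := by
    have h2 : (1 - Real.cos T) * J = 0 := by
      linear_combination eqJ - Real.sin T * hI0
    have hne : 1 - Real.cos T ≠ 0 := by
      intro h; apply hcT; linarith
    exact (mul_eq_zero.mp h2).resolve_left hne
  exact ⟨hI0, hJ0⟩

/-- First-order compatibility: for a resonance `p:q` with `p/q` not an even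
integer, the coefficients `B₁(τ0)`, `B₂(τ0)`, `B₃(τ0)` of the first-order
locking condition all vanish (hence `ε₁ = 0`).  Here `ρ = p/q`. -/
theorem first_order_compatibility_vanishes
    (p q : ℕ) (hp : 0 < p) (hq : 0 < q) (hpq : Nat.Coprime p q)
    (hnoteven : ¬ ∃ m : ℤ, (p : ℝ) / q = 2 * m)
    (Ω0 : ℝ) (hΩ0 : 0 < Ω0)
    (u0 : ℝ → ℝ) (hu0 : ContDiff ℝ 1 u0)
    (hu0anti : ∀ τ : ℝ, u0 (τ + π * ((p : ℝ) / q)) = - u0 τ)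
    (b : ℝ → ℝ) (hb : Continuous b)
    (hbanti : ∀ τ : ℝ, b (τ + π * ((p : ℝ) / q)) = - b τ)
    (F : ℝ → ℝ) (hF : Continuous F)
    (hFper : Function.Periodic F (π * ((p : ℝ) / q))) :
    ∀ τ0 : ℝ,
      (∫ τ in (0:ℝ)..(2 * π * (p : ℝ)),
        Real.exp (F τ) * b τ *
          ((((p : ℝ) / q) * Ω0)⁻¹ * (deriv u0 τ * (3 * (u0 τ) ^ 2 - 1))) *
          Real.sin (τ + τ0)) = 0 ∧
      (∫ τ in (0:ℝ)..(2 * π * (p : ℝ)),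
        Real.exp (F τ) * b τ *
          (((((p : ℝ) / q) * Ω0)⁻¹) ^ 2 * (u0 τ * ((u0 τ) ^ 2 - 1))) *
          Real.sin (τ + τ0)) = 0 ∧
      (∫ τ in (0:ℝ)..(2 * π * (p : ℝ)),
        Real.exp (F τ) * b τ *
          ((((p : ℝ) / q) * Ω0)⁻¹ * (u0 τ * ((u0 τ) ^ 2 - 1))) *
          Real.cos (τ + τ0)) = 0 := by
  intro τ0
  set T : ℝ := π * ((p : ℝ) / q) with hTdef
  set L : ℝ := 2 * π * (p : ℝ) with hLdef
  have hq0 : (q : ℝ) ≠ 0 := Nat.cast_ne_zero.mpr hq.ne'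
  have hLT : L = ((2 * q : ℕ) : ℝ) * T := by
    push_cast
    field_simp [hTdef, hLdef]
    rw [hLdef, hTdef]
    field_simp
  have hL2pi : ∃ n : ℤ, L = n * (2 * π) := ⟨(p : ℤ), by push_cast [hLdef]; ring⟩
  have hcT : Real.cos T ≠ 1 := by
    intro h
    rcases (Real.cos_eq_one_iff T).mp h with ⟨m, hm⟩
    apply hnoteven
    refine ⟨m, ?_⟩
    have hπ : (0:ℝ) < π := Real.pi_pos
    have : (m : ℝ) * (2 * π) = π * ((p : ℝ) / q) := hm
    field_simp at this ⊢
    nlinarith [this]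
  -- derivative of u0 is antiperiodic
  have hderiv_anti : ∀ τ : ℝ, deriv u0 (τ + T) = - deriv u0 τ := by
    intro τ
    have h1 : (fun x => u0 (x + T)) = fun x => - u0 x := funext fun x => hu0anti x
    have h2 : deriv (fun x => u0 (x + T)) τ = deriv u0 (τ + T) := deriv_comp_add_const u0 T τ
    rw [h1] at h2
    rw [← h2, deriv.fun_neg]
  have hu0c : Continuous u0 := hu0.continuous
  have hcderiv : Continuous (deriv u0) := (hu0.iterate_deriv' 0 1).continuous
  -- the three relevant πρ-periodic functions
  have hbF : ∀ τ : ℝ, Real.exp (F (τ + T)) * b (τ + T) = - (Real.exp (F τ) * b τ) := by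
    intro τ
    rw [hFper τ, hbanti τ]; ring
  -- g1
  set g1 : ℝ → ℝ := fun τ => Real.exp (F τ) * b τ *
      ((((p : ℝ) / q) * Ω0)⁻¹ * (deriv u0 τ * (3 * (u0 τ) ^ 2 - 1))) with hg1def
  have hg1per : Function.Periodic g1 T := by
    intro τ
    simp only [hg1def, hFper τ, hbanti τ, hderiv_anti τ, hu0anti τ]
    ring
  have hg1cont : Continuous g1 := by rw [hg1def]; fun_prop
  set g2 : ℝ → ℝ := fun τ => Real.exp (F τ) * b τ *
      (((((p : ℝ) / q) * Ω0)⁻¹) ^ 2 * (u0 τ * ((u0 τ) ^ 2 - 1))) with hg2def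
  have hg2per : Function.Periodic g2 T := by
    intro τ
    simp only [hg2def, hFper τ, hbanti τ, hu0anti τ]
    ring
  have hg2cont : Continuous g2 := by rw [hg2def]; fun_prop
  set g3 : ℝ → ℝ := fun τ => Real.exp (F τ) * b τ *
      ((((p : ℝ) / q) * Ω0)⁻¹ * (u0 τ * ((u0 τ) ^ 2 - 1))) with hg3def
  have hg3per : Function.Periodic g3 T := by
    intro τ
    simp only [hg3def, hFper τ, hbanti τ, hu0anti τ]
    ring
  have hg3cont : Continuous g3 := by rw [hg3def]; fun_prop
  have hL1 : Function.Periodic g1 L := by rw [hLT]; exact hg1per.nat_mul _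
  have hL2 : Function.Periodic g2 L := by rw [hLT]; exact hg2per.nat_mul _
  have hL3 : Function.Periodic g3 L := by rw [hLT]; exact hg3per.nat_mul _
  exact ⟨(periodic_pair_integral_zero g1 hg1cont T L hg1per hL1 hL2pi hcT τ0).1,
    (periodic_pair_integral_zero g2 hg2cont T L hg2per hL2 hL2pi hcT τ0).1,
    (periodic_pair_integral_zero g3 hg3cont T L hg3per hL3 hL2pi hcT τ0).2⟩
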